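/- The number of monomials x_1^{a_1} ⋯ x_n^{a_n} such that there exists j ∈ {1,...,n} with 0 ≤ a_i < i·m for all i < j, 0 ≤ a_j < m/p, and 0 ≤ a_i − m/p < (i−1)·m for all i > j, equals m^n · n! / p, for positive integers m, p, n with p dividing m. -/

import Mathlib

open Finset

/-- Membership in the Artin basis index set `A(m,p,n)` of `G(m,p,n)`: (`i` is 0-indexed here,
so the 1-indexed row `i` of the paper has index `i-1` and bound `a_i < i·m` reads
`a i < (i+1)·m`, etc.): there exists `j` with `a_i < i·m` for `i < j`, `a_j < m/p`,
and `m/p ≤ a_i < m/p + (i-1)·m` for `i > j`. -/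
def ArtinMem (m p n : ℕ) (a : Fin n → ℕ) : Prop :=
  ∃ j : Fin n,
    (∀ i : Fin n, i < j → a i < (i.1 + 1) * m) ∧
    a j < m / p ∧
    (∀ i : Fin n, j < i → m / p ≤ a i ∧ a i < m / p + i.1 * m)

open Classical in
/-- The Artin basis index set as a finite set of exponent tuples. -/
noncomputable def ArtinSet (m p n : ℕ) : Finset (Fin n → ℕ) :=
  (Fintype.piFinset fun i : Fin n => Finset.range ((i.1 + 1) * m)).filter (ArtinMem m p n)

lemma prod_erase_fact (n j : ℕ) (hj : j < n) :
    (∏ k ∈ (Finset.range n).erase j, (if k < j then k + 1 else k)) = (n - 1).factorial := by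
  have hsplit : (Finset.range n).erase j = Finset.range j ∪ Finset.Ico (j + 1) n := by
    ext k
    simp only [Finset.mem_erase, Finset.mem_range, Finset.mem_union, Finset.mem_Ico]
    omega
  have hdisj : Disjoint (Finset.range j) (Finset.Ico (j + 1) n) := by
    simp only [Finset.disjoint_left, Finset.mem_range, Finset.mem_Ico]
    omega
  rw [hsplit, Finset.prod_union hdisj]
  have h1 : (∏ k ∈ Finset.range j, (if k < j then k + 1 else k)) = j.factorial := by
    rw [Finset.prod_congr rfl (fun k hk => if_pos (Finset.mem_range.mp hk))]
    exact Finset.prod_range_add_one_eq_factorial j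
  have h2 : (∏ k ∈ Finset.Ico (j + 1) n, (if k < j then k + 1 else k))
      = ∏ k ∈ Finset.Ico (j + 1) n, k := by
    refine Finset.prod_congr rfl fun k hk => ?_
    rw [if_neg]
    simp only [Finset.mem_Ico] at hk
    omega
  rw [h1, h2]
  have h3 : (∏ k ∈ Finset.Ico 1 (j + 1), k) = j.factorial := by
    rw [Finset.prod_Ico_eq_prod_range]
    simpa [add_comm] using Finset.prod_range_add_one_eq_factorial j
  have h5 : (∏ k ∈ Finset.Ico 1 n, k) = (n - 1).factorial := by
    rw [Finset.prod_Ico_eq_prod_range]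
    simpa [add_comm] using Finset.prod_range_add_one_eq_factorial (n - 1)
  have h4 := Finset.prod_Ico_consecutive (fun k => k) (by omega : 1 ≤ j + 1) (by omega : j + 1 ≤ n)
  rw [h3] at h4
  rw [h4, h5]

/-- The Artin basis of `G(m,p,n)` has `m^n · n! / p` elements. -/
theorem artinSet_card (m p n : ℕ) (hm : 1 ≤ m) (hp : 1 ≤ p) (hn : 1 ≤ n) (hpm : p ∣ m) :
    (ArtinSet m p n).card * p = m ^ n * n.factorial := by
  classical
  have hq : p * (m / p) = m := Nat.mul_div_cancel' hpm
  set q := m / p with hqdef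
  have hqm : q ≤ m := Nat.div_le_self m p
  set F : Fin n → Fin n → Finset ℕ := fun j i =>
    if i < j then Finset.range ((i.1 + 1) * m)
    else if i = j then Finset.range q
    else Finset.Ico q (q + i.1 * m) with hF
  -- Step 1: ArtinSet is the union of the boxes
  have hset : ArtinSet m p n = Finset.univ.biUnion (fun j => Fintype.piFinset (F j)) := by
    ext a
    simp only [ArtinSet, Finset.mem_filter, Fintype.mem_piFinset, Finset.mem_range,
      Finset.mem_biUnion, Finset.mem_univ, true_and, ArtinMem]
    constructor
    · rintro ⟨hbox, j, h1, h2, h3⟩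
      refine ⟨j, fun i => ?_⟩
      simp only [hF]
      split_ifs with hlt heq
      · exact Finset.mem_range.mpr (hbox i)
      · subst heq; exact Finset.mem_range.mpr h2
      · have hji : j < i := by
          rcases lt_trichotomy i j with h | h | h
          · exact absurd h hlt
          · exact absurd h heq
          · exact h
        exact Finset.mem_Ico.mpr (h3 i hji)
    · rintro ⟨j, hmem⟩
      have hsum : ∀ i : Fin n, (i.1 + 1) * m = i.1 * m + m := fun i => by ring
      constructor
      · intro i
        have h := hmem i
        simp only [hF] at h
        split_ifs at h with hlt heq
        · exact Finset.mem_range.mp h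
        · have h' := Finset.mem_range.mp h
          have := hsum i
          omega
        · have h' := (Finset.mem_Ico.mp h).2
          have := hsum i
          omega
      · refine ⟨j, fun i hij => ?_, ?_, fun i hij => ?_⟩
        · have h := hmem i
          simp only [hF, if_pos hij] at h
          exact Finset.mem_range.mp h
        · have h := hmem j
          simp only [hF, lt_irrefl, if_neg (lt_irrefl j), if_pos rfl] at h
          exact Finset.mem_range.mp h
        · have h := hmem i
          simp only [hF, if_neg (not_lt.mpr hij.le), if_neg (ne_of_gt hij)] at h
          exact Finset.mem_Ico.mp h
  -- Step 2: the boxes are pairwise disjoint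
  have hdisj : ∀ j ∈ (Finset.univ : Finset (Fin n)), ∀ j' ∈ Finset.univ, j ≠ j' →
      Disjoint (Fintype.piFinset (F j)) (Fintype.piFinset (F j')) := by
    have key : ∀ j j' : Fin n, j < j' →
        Disjoint (Fintype.piFinset (F j)) (Fintype.piFinset (F j')) := by
      intro j j' hlt
      rw [Finset.disjoint_left]
      intro a haj haj'
      have h1 := Fintype.mem_piFinset.mp haj j'
      have h2 := Fintype.mem_piFinset.mp haj' j'
      simp only [hF, if_neg (not_lt.mpr hlt.le), if_neg (ne_of_gt hlt)] at h1
      simp only [hF, lt_irrefl, if_neg (lt_irrefl j'), if_pos rfl] at h2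
      have := (Finset.mem_Ico.mp h1).1
      have := Finset.mem_range.mp h2
      omega
    intro j _ j' _ hne
    rcases lt_or_gt_of_ne hne with h | h
    · exact key j j' h
    · exact (key j' j h).symm
  -- Step 3: cardinality of each box
  have hcard : ∀ j : Fin n, (Fintype.piFinset (F j)).card = q * ((n - 1).factorial * m ^ (n - 1)) := by
    intro j
    rw [Fintype.card_piFinset]
    have hcards : ∀ i : Fin n, (F j i).card =
        (fun k => if k < j.1 then (k + 1) * m else if k = j.1 then q else k * m) i.1 := by
      intro i
      simp only [hF]
      by_cases hlt : i < j
      · rw [if_pos hlt, if_pos (Fin.lt_def.mp hlt), Finset.card_range]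
      · rw [if_neg hlt, if_neg (fun h => hlt (Fin.lt_def.mpr h))]
        by_cases heq : i = j
        · rw [if_pos heq, if_pos (by rw [heq]), Finset.card_range]
        · rw [if_neg heq, if_neg (fun h => heq (Fin.val_injective h)), Nat.card_Ico,
            Nat.add_sub_cancel_left]
    rw [Finset.prod_congr rfl (fun i _ => hcards i),
      Fin.prod_univ_eq_prod_range (fun k => if k < j.1 then (k + 1) * m else if k = j.1 then q else k * m) n]
    rw [← Finset.mul_prod_erase _ _ (Finset.mem_range.mpr j.isLt)]
    have hgj : (if j.1 < j.1 then (j.1 + 1) * m else if j.1 = j.1 then q else j.1 * m) = q := by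
      simp
    rw [hgj]
    congr 1
    have : (∏ k ∈ (Finset.range n).erase j.1,
        (if k < j.1 then (k + 1) * m else if k = j.1 then q else k * m))
        = ∏ k ∈ (Finset.range n).erase j.1, ((if k < j.1 then k + 1 else k) * m) := by
      refine Finset.prod_congr rfl fun k hk => ?_
      have hkne : k ≠ j.1 := (Finset.mem_erase.mp hk).1
      by_cases hlt : k < j.1
      · rw [if_pos hlt, if_pos hlt]
      · rw [if_neg hlt, if_neg hkne, if_neg hlt]
    rw [this, Finset.prod_mul_distrib, Finset.prod_const,
      Finset.card_erase_of_mem (Finset.mem_range.mpr j.isLt), Finset.card_range,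
      prod_erase_fact n j.1 j.isLt]
  -- Step 4: put it together
  rw [hset, Finset.card_biUnion hdisj]
  rw [Finset.sum_congr rfl (fun j _ => hcard j), Finset.sum_const, Finset.card_univ,
    Fintype.card_fin, smul_eq_mul]
  have hpow : m ^ n = m ^ (n - 1) * m := by
    conv_lhs => rw [show n = (n - 1) + 1 by omega]
    rw [pow_succ]
  have hfact : n.factorial = n * (n - 1).factorial := (Nat.mul_factorial_pred (by omega)).symm
  rw [hpow, hfact]
  calc n * (q * ((n - 1).factorial * m ^ (n - 1))) * p
      = (p * q) * (m ^ (n - 1) * (n * (n - 1).factorial)) := by ring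
    _ = m ^ (n - 1) * m * (n * (n - 1).factorial) := by rw [hq]; ring
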